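/- Sign of the expected neighbor feature: for all a, τ ∈ ℝ, the quantity F(a, τ) has the same sign as a·τ; that is, F(a, τ) > 0 if aτ > 0, F(a, τ) < 0 if aτ < 0, and F(a, τ) = 0 if aτ = 0. -/

import Mathlib

open MeasureTheory

/-- The standard Gaussian density `φ(x) = (1/√(2π)) e^{-x²/2}`. -/
noncomputable def phi (x : ℝ) : ℝ :=
  (Real.sqrt (2 * Real.pi))⁻¹ * Real.exp (-x ^ 2 / 2)

/-- The Gauss error function `erf(z) = (2/√π) ∫₀^z e^{-t²} dt`. -/
noncomputable def erf (z : ℝ) : ℝ :=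
  (2 / Real.sqrt Real.pi) * ∫ t in (0 : ℝ)..z, Real.exp (-t ^ 2)

/-- The complementary error function `erfc(z) = 1 - erf(z)`. -/
noncomputable def erfc (z : ℝ) : ℝ := 1 - erf z

/-- The expected class-controlled feature `F(a, τ)` of a sampled neighbor of a node with
class-controlled feature `a` in the asymptotic CSBM-X model with A-X dependence strength
`τ`:
`F(a,τ) = τ (erfc((τ-a)/√2) - e^{2τa} erfc((τ+a)/√2)) / (erfc((τ-a)/√2) + e^{2τa} erfc((τ+a)/√2))`. -/
noncomputable def F (a τ : ℝ) : ℝ :=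
  τ * (erfc ((τ - a) / Real.sqrt 2) -
        Real.exp (2 * τ * a) * erfc ((τ + a) / Real.sqrt 2)) /
    (erfc ((τ - a) / Real.sqrt 2) +
      Real.exp (2 * τ * a) * erfc ((τ + a) / Real.sqrt 2))

namespace NeighborSign

open Real Set Filter

lemma cont_gauss : Continuous (fun t : ℝ => Real.exp (-t ^ 2)) := by
  continuity

lemma integrable_gauss : Integrable (fun t : ℝ => Real.exp (-t ^ 2)) := by
  have := integrable_exp_neg_mul_sq (b := (1:ℝ)) one_pos
  simpa using this

lemma sqrt_pi_pos : 0 < Real.sqrt Real.pi := Real.sqrt_pos.2 Real.pi_pos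

lemma integral_gauss_total : (∫ t : ℝ, Real.exp (-t ^ 2)) = Real.sqrt Real.pi := by
  have := integral_gaussian (1 : ℝ)
  simpa using this

lemma integral_gauss_Ioi_zero :
    (∫ t in Set.Ioi (0:ℝ), Real.exp (-t ^ 2)) = Real.sqrt Real.pi / 2 := by
  have := integral_gaussian_Ioi (1 : ℝ)
  simpa using this

lemma integral_gauss_Iic_zero :
    (∫ t in Set.Iic (0:ℝ), Real.exp (-t ^ 2)) = Real.sqrt Real.pi / 2 := by
  have h := intervalIntegral.integral_Iic_add_Ioi (b := (0:ℝ)) (f := fun t : ℝ => Real.exp (-t ^ 2))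
    integrable_gauss.integrableOn integrable_gauss.integrableOn
  rw [integral_gauss_total, integral_gauss_Ioi_zero] at h
  linarith

lemma integral_gauss_Iic_add_Ioi (z : ℝ) :
    (∫ t in Set.Iic z, Real.exp (-t ^ 2)) + (∫ t in Set.Ioi z, Real.exp (-t ^ 2))
      = Real.sqrt Real.pi := by
  have h := intervalIntegral.integral_Iic_add_Ioi (b := z) (f := fun t : ℝ => Real.exp (-t ^ 2))
    integrable_gauss.integrableOn integrable_gauss.integrableOn
  rw [integral_gauss_total] at h
  exact h

lemma erfc_eq (z : ℝ) :
    erfc z = (2 / Real.sqrt Real.pi) * ∫ t in Set.Ioi z, Real.exp (-t ^ 2) := by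
  have h1 : (∫ t in (0:ℝ)..z, Real.exp (-t ^ 2))
      = (∫ t in Set.Iic z, Real.exp (-t ^ 2)) - ∫ t in Set.Iic (0:ℝ), Real.exp (-t ^ 2) :=
    (intervalIntegral.integral_Iic_sub_Iic integrable_gauss.integrableOn
      integrable_gauss.integrableOn).symm
  have h2 := integral_gauss_Iic_add_Ioi z
  have hπ : Real.sqrt Real.pi ≠ 0 := ne_of_gt sqrt_pi_pos
  rw [erfc, erf, h1, integral_gauss_Iic_zero]
  have hIic : (∫ t in Set.Iic z, Real.exp (-t ^ 2))
      = Real.sqrt Real.pi - ∫ t in Set.Ioi z, Real.exp (-t ^ 2) := by linarith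
  rw [hIic]
  field_simp
  ring

lemma integral_gauss_Ioi_pos (z : ℝ) :
    0 < ∫ t in Set.Ioi z, Real.exp (-t ^ 2) := by
  rw [MeasureTheory.setIntegral_pos_iff_support_of_nonneg_ae]
  · have : (Function.support fun t : ℝ => Real.exp (-t ^ 2)) = Set.univ := by
      ext t; simp [Function.support, (Real.exp_pos _).ne']
    rw [this, Set.univ_inter, Real.volume_Ioi]
    simp
  · filter_upwards with t using (Real.exp_pos _).le
  · exact integrable_gauss.integrableOn

lemma erfc_pos (z : ℝ) : 0 < erfc z := by
  rw [erfc_eq]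
  exact mul_pos (by positivity) (integral_gauss_Ioi_pos z)

lemma hasDerivAt_erf (z : ℝ) :
    HasDerivAt erf (2 / Real.sqrt Real.pi * Real.exp (-z ^ 2)) z := by
  have h := (cont_gauss.integral_hasStrictDerivAt 0 z).hasDerivAt
  exact h.const_mul (2 / Real.sqrt Real.pi)

lemma hasDerivAt_erfc (z : ℝ) :
    HasDerivAt erfc (-(2 / Real.sqrt Real.pi * Real.exp (-z ^ 2))) z := by
  have : erfc = fun z => 1 - erf z := rfl
  rw [this]
  exact (hasDerivAt_erf z).const_sub 1

/-- Mills-type bound: `∫ t in Ioi z, t e^{-t²} = e^{-z²}/2`. -/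
lemma integral_t_gauss_Ioi (z : ℝ) :
    (∫ t in Set.Ioi z, t * Real.exp (-t ^ 2)) = Real.exp (-z ^ 2) / 2 := by
  have hd : ∀ x ∈ Set.Ici z, HasDerivAt (fun t : ℝ => -Real.exp (-t ^ 2) / 2)
      (x * Real.exp (-x ^ 2)) x := by
    intro x _
    have h1 : HasDerivAt (fun t : ℝ => -t ^ 2) (-(2 * x)) x := by
      exact (hasDerivAt_pow 2 x).neg.congr_deriv (by simp)
    have h2 := (Real.hasDerivAt_exp (-x ^ 2)).comp x h1
    have h3 := (h2.neg).div_const 2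
    refine h3.congr_deriv ?_
    ring
  have hint : IntegrableOn (fun t : ℝ => t * Real.exp (-t ^ 2)) (Set.Ioi z) := by
    have := integrable_mul_exp_neg_mul_sq (b := (1:ℝ)) one_pos
    simpa using this.integrableOn
  have htend : Tendsto (fun t : ℝ => -Real.exp (-t ^ 2) / 2) atTop (nhds 0) := by
    have h1 : Tendsto (fun t : ℝ => -t ^ 2) atTop atBot := by
      have := (tendsto_pow_atTop (n := 2) (by norm_num)).comp (tendsto_id (α := ℝ))
      simpa using this.neg_atBot
    have h2 : Tendsto (fun t : ℝ => Real.exp (-t ^ 2)) atTop (nhds 0) :=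
      Real.tendsto_exp_atBot.comp h1
    have := (h2.neg).div_const 2
    simpa using this
  have := MeasureTheory.integral_Ioi_of_hasDerivAt_of_tendsto' hd hint htend
  rw [this]
  ring

lemma integral_gauss_lt (z : ℝ) (hz : 0 < z) :
    (∫ t in Set.Ioi z, Real.exp (-t ^ 2)) < Real.exp (-z ^ 2) / (2 * z) := by
  have hint1 : IntegrableOn (fun t : ℝ => t * Real.exp (-t ^ 2)) (Set.Ioi z) := by
    have := integrable_mul_exp_neg_mul_sq (b := (1:ℝ)) one_pos
    simpa using this.integrableOn
  have hint2 : IntegrableOn (fun t : ℝ => Real.exp (-t ^ 2)) (Set.Ioi z) :=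
    integrable_gauss.integrableOn
  have hg : IntegrableOn
      (fun t : ℝ => (t / z - 1) * Real.exp (-t ^ 2)) (Set.Ioi z) := by
    have : (fun t : ℝ => (t / z - 1) * Real.exp (-t ^ 2))
        = fun t : ℝ => (1 / z) * (t * Real.exp (-t ^ 2)) - Real.exp (-t ^ 2) := by
      funext t; field_simp
    rw [this]
    exact (hint1.const_mul (1 / z)).sub hint2
  have hnn : (0:ℝ → ℝ) ≤ᵐ[volume.restrict (Set.Ioi z)]
      fun t : ℝ => (t / z - 1) * Real.exp (-t ^ 2) := by
    refine MeasureTheory.ae_restrict_of_forall_mem measurableSet_Ioi fun t ht => ?_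
    have h1 : (0:ℝ) ≤ t / z - 1 := by
      rw [sub_nonneg, le_div_iff₀ hz]
      have : z < t := ht
      nlinarith
    exact mul_nonneg h1 (Real.exp_pos _).le
  have hpos : 0 < ∫ t in Set.Ioi z, (t / z - 1) * Real.exp (-t ^ 2) := by
    rw [MeasureTheory.setIntegral_pos_iff_support_of_nonneg_ae hnn hg]
    have hsub : Set.Ioi z ⊆
        (Function.support fun t : ℝ => (t / z - 1) * Real.exp (-t ^ 2)) ∩ Set.Ioi z := by
      intro t ht
      refine ⟨?_, ht⟩
      have h1 : 0 < t / z - 1 := by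
        rw [sub_pos, lt_div_iff₀ hz]
        simpa using ht
      exact ne_of_gt (mul_pos h1 (Real.exp_pos _))
    refine lt_of_lt_of_le ?_ (measure_mono hsub)
    simp [Real.volume_Ioi]
  have hsplit : (∫ t in Set.Ioi z, (t / z - 1) * Real.exp (-t ^ 2))
      = (1 / z) * (∫ t in Set.Ioi z, t * Real.exp (-t ^ 2))
        - ∫ t in Set.Ioi z, Real.exp (-t ^ 2) := by
    rw [← MeasureTheory.integral_const_mul, ← MeasureTheory.integral_sub
      (hint1.const_mul (1 / z)) hint2]
    congr 1; funext t; field_simp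
  rw [hsplit, integral_t_gauss_Ioi] at hpos
  have : (1 / z) * (Real.exp (-z ^ 2) / 2) = Real.exp (-z ^ 2) / (2 * z) := by
    field_simp
  linarith [hpos, this]

/-- Strict Mills inequality. -/
lemma mills (z : ℝ) (hz : 0 < z) :
    erfc z < Real.exp (-z ^ 2) / (z * Real.sqrt Real.pi) := by
  rw [erfc_eq]
  have h := integral_gauss_lt z hz
  have h2 : (2 / Real.sqrt Real.pi) * (Real.exp (-z ^ 2) / (2 * z))
      = Real.exp (-z ^ 2) / (z * Real.sqrt Real.pi) := by
    field_simp
  calc (2 / Real.sqrt Real.pi) * ∫ t in Set.Ioi z, Real.exp (-t ^ 2)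
      < (2 / Real.sqrt Real.pi) * (Real.exp (-z ^ 2) / (2 * z)) := by
        exact mul_lt_mul_of_pos_left h (by positivity)
    _ = Real.exp (-z ^ 2) / (z * Real.sqrt Real.pi) := h2

/-- The auxiliary function `M x = e^{x²/2} erfc(x/√2)`. -/
noncomputable def M (x : ℝ) : ℝ := Real.exp (x ^ 2 / 2) * erfc (x / Real.sqrt 2)

lemma sq_div_sqrt_two (x : ℝ) : (x / Real.sqrt 2) ^ 2 = x ^ 2 / 2 := by
  rw [div_pow, Real.sq_sqrt (by norm_num : (2:ℝ) ≥ 0)]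

lemma hasDerivAt_M (x : ℝ) :
    HasDerivAt M (x * Real.exp (x ^ 2 / 2) * erfc (x / Real.sqrt 2)
      - Real.sqrt 2 / Real.sqrt Real.pi) x := by
  have h1 : HasDerivAt (fun x : ℝ => Real.exp (x ^ 2 / 2)) (x * Real.exp (x ^ 2 / 2)) x := by
    have ha : HasDerivAt (fun x : ℝ => x ^ 2 / 2) x x := by
      simpa using (hasDerivAt_pow 2 x).div_const 2
    have := (Real.hasDerivAt_exp (x ^ 2 / 2)).comp x ha
    exact this.congr_deriv (by ring)
  have h2 : HasDerivAt (fun x : ℝ => erfc (x / Real.sqrt 2))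
      (-(2 / Real.sqrt Real.pi * Real.exp (-(x / Real.sqrt 2) ^ 2)) * (1 / Real.sqrt 2)) x := by
    have ha : HasDerivAt (fun x : ℝ => x / Real.sqrt 2) (1 / Real.sqrt 2) x := by
      simpa using (hasDerivAt_id x).div_const (Real.sqrt 2)
    have := (hasDerivAt_erfc (x / Real.sqrt 2)).comp x ha
    exact this
  have h := h1.mul h2
  refine h.congr_deriv ?_
  have key : Real.exp (x ^ 2 / 2) * Real.exp (-(x / Real.sqrt 2) ^ 2) = 1 := by
    rw [sq_div_sqrt_two, ← Real.exp_add]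
    simp
  have h2s : (2:ℝ) / Real.sqrt 2 = Real.sqrt 2 := Real.div_sqrt
  have hterm : Real.exp (x ^ 2 / 2) *
      (-(2 / Real.sqrt Real.pi * Real.exp (-(x / Real.sqrt 2) ^ 2)) * (1 / Real.sqrt 2))
      = -(Real.sqrt 2 / Real.sqrt Real.pi) := by
    have expand : Real.exp (x ^ 2 / 2) *
        (-(2 / Real.sqrt Real.pi * Real.exp (-(x / Real.sqrt 2) ^ 2)) * (1 / Real.sqrt 2))
        = -((Real.exp (x ^ 2 / 2) * Real.exp (-(x / Real.sqrt 2) ^ 2)) *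
            (2 / Real.sqrt 2 / Real.sqrt Real.pi)) := by
      ring
    rw [expand, key, h2s, one_mul]
  rw [hterm]
  ring

lemma derivM_neg (x : ℝ) :
    x * Real.exp (x ^ 2 / 2) * erfc (x / Real.sqrt 2)
      - Real.sqrt 2 / Real.sqrt Real.pi < 0 := by
  have hs2 : (0:ℝ) < Real.sqrt 2 := Real.sqrt_pos.2 (by norm_num)
  rcases le_or_gt x 0 with hx | hx
  · have h1 : x * Real.exp (x ^ 2 / 2) * erfc (x / Real.sqrt 2) ≤ 0 := by
      have := mul_pos (Real.exp_pos (x ^ 2 / 2)) (erfc_pos (x / Real.sqrt 2))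
      nlinarith
    have h2 : 0 < Real.sqrt 2 / Real.sqrt Real.pi := by positivity
    linarith
  · have hz : 0 < x / Real.sqrt 2 := div_pos hx hs2
    have hm := mills (x / Real.sqrt 2) hz
    rw [sq_div_sqrt_two] at hm
    have hxe : 0 < x * Real.exp (x ^ 2 / 2) := mul_pos hx (Real.exp_pos _)
    have h3 : x * Real.exp (x ^ 2 / 2) * erfc (x / Real.sqrt 2)
        < x * Real.exp (x ^ 2 / 2) *
          (Real.exp (-(x ^ 2) / 2) / (x / Real.sqrt 2 * Real.sqrt Real.pi)) := by
      apply mul_lt_mul_of_pos_left _ hxe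
      rw [neg_div]; exact hm
    have heq : x * Real.exp (x ^ 2 / 2) *
        (Real.exp (-(x ^ 2) / 2) / (x / Real.sqrt 2 * Real.sqrt Real.pi))
        = Real.sqrt 2 / Real.sqrt Real.pi := by
      have key : Real.exp (x ^ 2 / 2) * Real.exp (-(x ^ 2) / 2) = 1 := by
        rw [← Real.exp_add]
        norm_num
        ring
      have key' : Real.exp (x ^ 2 / 2) * Real.exp (-(x ^ 2 / 2)) = 1 := by
        rw [← Real.exp_add]; simp
      field_simp
      linear_combination key'
    linarith [h3, heq.symm.le]

lemma strictAnti_M : StrictAnti M := by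
  apply strictAnti_of_deriv_neg
  intro x
  rw [(hasDerivAt_M x).deriv]
  exact derivM_neg x

/-- The numerator factor is positive when `a > 0`. -/
lemma N_pos (a τ : ℝ) (ha : 0 < a) :
    0 < erfc ((τ - a) / Real.sqrt 2)
      - Real.exp (2 * τ * a) * erfc ((τ + a) / Real.sqrt 2) := by
  have h := strictAnti_M (show τ - a < τ + a by linarith)
  have hM : Real.exp ((τ + a) ^ 2 / 2) * erfc ((τ + a) / Real.sqrt 2)
      < Real.exp ((τ - a) ^ 2 / 2) * erfc ((τ - a) / Real.sqrt 2) := h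
  have key : Real.exp (2 * τ * a) * Real.exp ((τ - a) ^ 2 / 2)
      = Real.exp ((τ + a) ^ 2 / 2) := by
    rw [← Real.exp_add]; congr 1; ring
  have hE : (0:ℝ) < Real.exp ((τ - a) ^ 2 / 2) := Real.exp_pos _
  rw [← key] at hM
  have h2 : Real.exp ((τ - a) ^ 2 / 2) * (Real.exp (2 * τ * a) * erfc ((τ + a) / Real.sqrt 2))
      < Real.exp ((τ - a) ^ 2 / 2) * erfc ((τ - a) / Real.sqrt 2) := by
    nlinarith [hM]
  have := (mul_lt_mul_iff_right₀ hE).mp h2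
  linarith

/-- The numerator factor is negative when `a < 0`. -/
lemma N_neg (a τ : ℝ) (ha : a < 0) :
    erfc ((τ - a) / Real.sqrt 2)
      - Real.exp (2 * τ * a) * erfc ((τ + a) / Real.sqrt 2) < 0 := by
  have h := N_pos (-a) τ (by linarith)
  have h1 : τ - -a = τ + a := by ring
  have h2 : τ + -a = τ - a := by ring
  rw [h1, h2] at h
  have key : Real.exp (2 * τ * a) * Real.exp (2 * τ * -a) = 1 := by
    rw [← Real.exp_add]; ring_nf; exact Real.exp_zero
  have hE : (0:ℝ) < Real.exp (2 * τ * a) := Real.exp_pos _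
  nlinarith [h, erfc_pos ((τ - a) / Real.sqrt 2), erfc_pos ((τ + a) / Real.sqrt 2)]

lemma N_zero (τ : ℝ) :
    erfc ((τ - 0) / Real.sqrt 2)
      - Real.exp (2 * τ * 0) * erfc ((τ + 0) / Real.sqrt 2) = 0 := by
  simp

lemma D_pos (a τ : ℝ) :
    0 < erfc ((τ - a) / Real.sqrt 2)
      + Real.exp (2 * τ * a) * erfc ((τ + a) / Real.sqrt 2) :=
  add_pos (erfc_pos _) (mul_pos (Real.exp_pos _) (erfc_pos _))

end NeighborSign

/-- sign of the expected neighbor feature: for all `a, τ`, the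
quantity `F(a, τ)` has the same sign as `a · τ`. -/
theorem expected_neighbor_feature_sign (a τ : ℝ) :
    (0 < a * τ → 0 < F a τ) ∧ (a * τ < 0 → F a τ < 0) ∧ (a * τ = 0 → F a τ = 0) := by
  have hD := NeighborSign.D_pos a τ
  refine ⟨?_, ?_, ?_⟩
  · intro h
    rcases mul_pos_iff.mp h with ⟨ha, hτ⟩ | ⟨ha, hτ⟩
    · have hN := NeighborSign.N_pos a τ ha
      unfold F
      exact div_pos (mul_pos hτ hN) hD
    · have hN := NeighborSign.N_neg a τ ha
      unfold F
      exact div_pos (mul_pos_of_neg_of_neg hτ (by linarith)) hD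
  · intro h
    rcases mul_neg_iff.mp h with ⟨ha, hτ⟩ | ⟨ha, hτ⟩
    · have hN := NeighborSign.N_pos a τ ha
      unfold F
      exact div_neg_of_neg_of_pos (mul_neg_of_neg_of_pos hτ hN) hD
    · have hN := NeighborSign.N_neg a τ ha
      unfold F
      exact div_neg_of_neg_of_pos (mul_neg_of_pos_of_neg hτ (by linarith)) hD
  · intro h
    rcases mul_eq_zero.mp h with ha | hτ
    · subst ha
      unfold F
      rw [NeighborSign.N_zero τ]
      simp
    · subst hτ
      unfold F
      simp
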